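/- The FKG inequality for FK percolation with cluster weight q ≥ 1: on a finite graph G = (V,E), for p ∈ [0,1] and q ≥ 1, and any two increasing functions f, g : {0,1}^E → ℝ, one has φ_{G,p,q}[fg] ≥ φ_{G,p,q}[f]·φ_{G,p,q}[g]. -/

import Mathlib

open Finset

/-- The subgraph of `G` consisting of the open edges of a percolation
configuration `ω ∈ {0,1}^E`. -/
def openGraph {V : Type*} [Fintype V] [DecidableEq V]
    (G : SimpleGraph V) [DecidableRel G.Adj] (ω : ↥G.edgeFinset → Bool) :
    SimpleGraph V where
  Adj x y := x ≠ y ∧ ∃ e : ↥G.edgeFinset, ω e = true ∧ (e : Sym2 V) = s(x, y)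
  symm := by
    constructor
    rintro x y ⟨hxy, e, hω, he⟩
    exact ⟨hxy.symm, e, hω, he.trans Sym2.eq_swap⟩
  loopless := ⟨fun x h => h.1 rfl⟩

/-- The number `k(ω)` of connected components of the subgraph `(V, {e : ω_e = 1})`. -/
noncomputable def numComponents {V : Type*} [Fintype V] [DecidableEq V]
    (G : SimpleGraph V) [DecidableRel G.Adj] (ω : ↥G.edgeFinset → Bool) : ℕ :=
  Nat.card (openGraph G ω).ConnectedComponent

/-- The number of open edges `|ω|`. -/
def numOpen {V : Type*} [Fintype V] [DecidableEq V]
    (G : SimpleGraph V) [DecidableRel G.Adj] (ω : ↥G.edgeFinset → Bool) : ℕ :=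
  (Finset.univ.filter fun e => ω e = true).card

/-- The FK percolation weight `p^{|ω|} (1-p)^{|E|-|ω|} q^{k(ω)}`. -/
noncomputable def fkWeight {V : Type*} [Fintype V] [DecidableEq V]
    (G : SimpleGraph V) [DecidableRel G.Adj] (p q : ℝ) (ω : ↥G.edgeFinset → Bool) : ℝ :=
  p ^ numOpen G ω * (1 - p) ^ (G.edgeFinset.card - numOpen G ω) * q ^ numComponents G ω

/-- The FK percolation expectation `φ_{G,p,q}[f]`. -/
noncomputable def fkExpect {V : Type*} [Fintype V] [DecidableEq V]
    (G : SimpleGraph V) [DecidableRel G.Adj] (p q : ℝ)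
    (f : (↥G.edgeFinset → Bool) → ℝ) : ℝ :=
  (∑ ω : ↥G.edgeFinset → Bool, f ω * fkWeight G p q ω) /
    (∑ ω : ↥G.edgeFinset → Bool, fkWeight G p q ω)


namespace FKGAux

open SimpleGraph

variable {V : Type*} [Fintype V] [DecidableEq V]
  {G : SimpleGraph V} [DecidableRel G.Adj]

lemma openGraph_mono {ω ω' : ↥G.edgeFinset → Bool} (h : ω ≤ ω') :
    openGraph G ω ≤ openGraph G ω' := by
  intro x y hadj
  obtain ⟨hxy, e, hω, he⟩ : x ≠ y ∧ ∃ e : ↥G.edgeFinset, ω e = true ∧ (e : Sym2 V) = s(x, y) :=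
    hadj
  refine ⟨hxy, e, ?_, he⟩
  have := h e
  rw [hω] at this
  exact (Bool.eq_true_of_true_le this)

/-- The induced map on connected components. -/
noncomputable def cmap {ω ω' : ↥G.edgeFinset → Bool} (h : ω ≤ ω') :
    (openGraph G ω).ConnectedComponent → (openGraph G ω').ConnectedComponent :=
  ConnectedComponent.map (Hom.ofLE (openGraph_mono h))

@[simp] lemma cmap_mk {ω ω' : ↥G.edgeFinset → Bool} (h : ω ≤ ω') (v : V) :
    cmap h ((openGraph G ω).connectedComponentMk v)
      = (openGraph G ω').connectedComponentMk v := rfl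

lemma cmap_surjective {ω ω' : ↥G.edgeFinset → Bool} (h : ω ≤ ω') :
    Function.Surjective (cmap h) := by
  intro c
  induction c using ConnectedComponent.ind with
  | _ v => exact ⟨(openGraph G ω).connectedComponentMk v, rfl⟩

lemma numComponents_anti {ω ω' : ↥G.edgeFinset → Bool} (h : ω ≤ ω') :
    numComponents G ω' ≤ numComponents G ω :=
  Nat.card_le_card_of_surjective _ (cmap_surjective h)

lemma reach_update {ω : ↥G.edgeFinset → Bool} {e : ↥G.edgeFinset} {a b : V}
    (hab : (e : Sym2 V) = s(a, b)) {x y : V}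
    (h : (openGraph G (Function.update ω e true)).Reachable x y) :
    (openGraph G ω).Reachable x y ∨
      ((openGraph G ω).Reachable x a ∧ (openGraph G ω).Reachable b y) ∨
      ((openGraph G ω).Reachable x b ∧ (openGraph G ω).Reachable a y) := by
  obtain ⟨w⟩ := h
  induction w with
  | nil => exact Or.inl (Reachable.refl _)
  | @cons x z y hadj p ih =>
    obtain ⟨hxz, e', hω', he'⟩ : x ≠ z ∧ ∃ e' : ↥G.edgeFinset,
        (Function.update ω e true) e' = true ∧ (e' : Sym2 V) = s(x, z) := hadj
    rcases ih with h1 | ⟨h2a, h2b⟩ | ⟨h3a, h3b⟩ <;>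
    · by_cases hee : e' = e
      · subst hee
        rw [hab] at he'
        rw [Sym2.eq_iff] at he'
        rcases he' with ⟨rfl, rfl⟩ | ⟨rfl, rfl⟩ <;>
          first
          | exact Or.inl (by
              first
              | exact h1
              | exact (h2a.symm.trans h2b)
              | exact (h3a.symm.trans h3b)
              | exact h2b
              | exact h3b)
          | exact Or.inr (Or.inl ⟨Reachable.refl _, h1⟩)
          | exact Or.inr (Or.inr ⟨Reachable.refl _, h1⟩)
      · rw [Function.update_of_ne hee] at hω'
        have hxzr : (openGraph G ω).Reachable x z := Adj.reachable ⟨hxz, e', hω', he'⟩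
        first
        | exact Or.inl (hxzr.trans h1)
        | exact Or.inr (Or.inl ⟨hxzr.trans h2a, h2b⟩)
        | exact Or.inr (Or.inr ⟨hxzr.trans h3a, h3b⟩)

lemma le_update_true (ω : ↥G.edgeFinset → Bool) (e : ↥G.edgeFinset) :
    ω ≤ Function.update ω e true := by
  intro x
  by_cases hx : x = e
  · subst hx; simp
  · rw [Function.update_of_ne hx]

lemma numComponents_update_of_reachable {ω : ↥G.edgeFinset → Bool} {e : ↥G.edgeFinset}
    {a b : V} (hab : (e : Sym2 V) = s(a, b))
    (hr : (openGraph G ω).Reachable a b) :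
    numComponents G ω = numComponents G (Function.update ω e true) := by
  set ω' := Function.update ω e true with hω'
  have h : ω ≤ ω' := le_update_true ω e
  refine Nat.card_eq_of_bijective (cmap h) ⟨?_, cmap_surjective h⟩
  refine ConnectedComponent.ind₂ (fun x y hc => ?_)
  rw [cmap_mk, cmap_mk, ConnectedComponent.eq] at hc
  rw [ConnectedComponent.eq]
  rcases reach_update hab hc with h1 | ⟨h2a, h2b⟩ | ⟨h3a, h3b⟩
  · exact h1
  · exact h2a.trans (hr.trans h2b)
  · exact h3a.trans (hr.symm.trans h3b)

lemma numComponents_update_of_not_reachable {ω : ↥G.edgeFinset → Bool} {e : ↥G.edgeFinset}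
    {a b : V} (hab : (e : Sym2 V) = s(a, b)) (hne : a ≠ b)
    (hnr : ¬ (openGraph G ω).Reachable a b) :
    numComponents G ω = numComponents G (Function.update ω e true) + 1 := by
  classical
  set ω' := Function.update ω e true with hω'
  have h : ω ≤ ω' := le_update_true ω e
  set cb := (openGraph G ω).connectedComponentMk b with hcb
  haveI : Finite (openGraph G ω).ConnectedComponent := Quot.finite _
  haveI : Finite (openGraph G ω').ConnectedComponent := Quot.finite _
  have hbij : Function.Bijective
      (fun c : {c : (openGraph G ω).ConnectedComponent // c ≠ cb} => cmap h c.1) := by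
    constructor
    · rintro ⟨c₁, h₁⟩ ⟨c₂, h₂⟩ hc
      obtain ⟨x, rfl⟩ := c₁.exists_rep
      obtain ⟨y, rfl⟩ := c₂.exists_rep
      change (openGraph G ω).connectedComponentMk x ≠ cb at h₁
      change (openGraph G ω).connectedComponentMk y ≠ cb at h₂
      change (openGraph G ω').connectedComponentMk x
        = (openGraph G ω').connectedComponentMk y at hc
      rw [ConnectedComponent.eq] at hc
      rcases reach_update hab hc with h1 | ⟨h2a, h2b⟩ | ⟨h3a, h3b⟩
      · exact Subtype.ext (ConnectedComponent.eq.mpr h1)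
      · exact absurd (ConnectedComponent.eq.mpr h2b.symm) h₂
      · exact absurd (ConnectedComponent.eq.mpr h3a) h₁
    · intro c'
      obtain ⟨v, rfl⟩ := c'.exists_rep
      show ∃ c : {c : (openGraph G ω).ConnectedComponent // c ≠ cb}, cmap h c.1 = (openGraph G ω').connectedComponentMk v
      have hadj : (openGraph G ω').Adj a b :=
        ⟨hne, e, Function.update_self e true ω, hab⟩
      by_cases hvb : (openGraph G ω).Reachable v b
      · refine ⟨⟨(openGraph G ω).connectedComponentMk a, fun hac => hnr ?_⟩, ?_⟩
        · exact ConnectedComponent.eq.mp hac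
        · show (openGraph G ω').connectedComponentMk a
            = (openGraph G ω').connectedComponentMk v
          rw [ConnectedComponent.eq]
          exact hadj.reachable.trans (Reachable.mono (openGraph_mono h) hvb).symm
      · exact ⟨⟨(openGraph G ω).connectedComponentMk v,
          fun hvc => hvb (ConnectedComponent.eq.mp hvc)⟩, rfl⟩
  have hcard : Nat.card (openGraph G ω').ConnectedComponent =
      Nat.card {c : (openGraph G ω).ConnectedComponent // c ≠ cb} :=
    (Nat.card_eq_of_bijective _ hbij).symm
  haveI : Fintype (openGraph G ω).ConnectedComponent := Fintype.ofFinite _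
  have hsplit : Nat.card {c : (openGraph G ω).ConnectedComponent // c ≠ cb} + 1 =
      Nat.card (openGraph G ω).ConnectedComponent := by
    have h1 : Fintype.card {c : (openGraph G ω).ConnectedComponent // ¬ c = cb} =
        Fintype.card (openGraph G ω).ConnectedComponent -
          Fintype.card {c : (openGraph G ω).ConnectedComponent // c = cb} :=
      Fintype.card_subtype_compl _
    have h2 : Fintype.card {c : (openGraph G ω).ConnectedComponent // c = cb} = 1 :=
      Fintype.card_subtype_eq cb
    have h3 : 0 < Fintype.card (openGraph G ω).ConnectedComponent :=
      Fintype.card_pos_iff.mpr ⟨cb⟩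
    simp only [← Nat.card_eq_fintype_card] at h1 h2 h3
    have h5 : Nat.card {c : (openGraph G ω).ConnectedComponent // c ≠ cb}
        = Nat.card {c : (openGraph G ω).ConnectedComponent // ¬ c = cb} := rfl
    omega
  show Nat.card (openGraph G ω).ConnectedComponent
    = Nat.card (openGraph G ω').ConnectedComponent + 1
  rw [hcard]
  exact hsplit.symm

lemma exists_endpoints (e : ↥G.edgeFinset) :
    ∃ a b : V, a ≠ b ∧ (e : Sym2 V) = s(a, b) := by
  obtain ⟨⟨a, b⟩, hab⟩ := Quot.exists_rep (e : Sym2 V)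
  have he : (e : Sym2 V) ∈ G.edgeSet := by
    rw [← SimpleGraph.mem_edgeFinset]; exact e.2
  have hab' : s(a, b) = (e : Sym2 V) := hab
  refine ⟨a, b, ?_, hab'.symm⟩
  rw [← hab', SimpleGraph.mem_edgeSet] at he
  exact he.ne

lemma step_ineq {ω ω' : ↥G.edgeFinset → Bool} (h : ω ≤ ω') (e : ↥G.edgeFinset) :
    numComponents G ω' + numComponents G (Function.update ω e true)
      ≤ numComponents G ω + numComponents G (Function.update ω' e true) := by
  obtain ⟨a, b, hne, hab⟩ := exists_endpoints (G := G) e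
  cases hc : ω' e with
  | true =>
    have hupd : Function.update ω' e true = ω' := by
      rw [← hc]; exact Function.update_eq_self e ω'
    rw [hupd]
    have := numComponents_anti (le_update_true ω e)
    omega
  | false =>
    by_cases hr : (openGraph G ω).Reachable a b
    · have h1 := numComponents_update_of_reachable (ω := ω) hab hr
      have h2 := numComponents_update_of_reachable (ω := ω') hab
        (hr.mono (openGraph_mono h))
      omega
    · have h1 := numComponents_update_of_not_reachable (ω := ω) hab hne hr
      by_cases hr' : (openGraph G ω').Reachable a b
      · have h2 := numComponents_update_of_reachable (ω := ω') hab hr'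
        have := numComponents_anti (le_update_true ω' e)
        omega
      · have h2 := numComponents_update_of_not_reachable (ω := ω') hab hne hr'
        omega

/-- `ω` with all edges of `s` forced open. -/
def orInd (s : Finset ↥G.edgeFinset) (ω : ↥G.edgeFinset → Bool) : ↥G.edgeFinset → Bool :=
  fun e => if e ∈ s then true else ω e

lemma orInd_empty (ω : ↥G.edgeFinset → Bool) : orInd (G := G) ∅ ω = ω := by
  funext x; simp [orInd]

lemma orInd_insert (a : ↥G.edgeFinset) (s : Finset ↥G.edgeFinset)
    (ω : ↥G.edgeFinset → Bool) :
    orInd (G := G) (insert a s) ω = Function.update (orInd (G := G) s ω) a true := by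
  funext x
  by_cases hx : x = a
  · subst hx; simp [orInd]
  · rw [Function.update_of_ne hx]
    simp [orInd, hx]

lemma orInd_mono (s : Finset ↥G.edgeFinset) {ω ω' : ↥G.edgeFinset → Bool} (h : ω ≤ ω') :
    orInd (G := G) s ω ≤ orInd (G := G) s ω' := by
  intro x
  unfold orInd
  by_cases hx : x ∈ s
  · simp [hx]
  · simp only [if_neg hx]; exact h x

lemma telescope_ineq (s : Finset ↥G.edgeFinset) :
    ∀ ω ω' : ↥G.edgeFinset → Bool, ω ≤ ω' →
    numComponents G ω' + numComponents G (orInd (G := G) s ω)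
      ≤ numComponents G ω + numComponents G (orInd (G := G) s ω') := by
  classical
  induction s using Finset.induction_on with
  | empty => intro ω ω' h; rw [orInd_empty, orInd_empty]; omega
  | insert _ _ ha ih =>
    intro ω ω' h
    rename_i a s
    rw [orInd_insert, orInd_insert]
    have h1 := ih ω ω' h
    have h2 := step_ineq (orInd_mono (G := G) s h) a
    omega

lemma numComponents_submodular (ω ω' : ↥G.edgeFinset → Bool) :
    numComponents G ω + numComponents G ω'
      ≤ numComponents G (ω ⊓ ω') + numComponents G (ω ⊔ ω') := by
  classical
  have key := telescope_ineq (G := G) (Finset.univ.filter fun e => ω e = true)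
    (ω ⊓ ω') ω' inf_le_right
  have e1 : orInd (G := G) (Finset.univ.filter fun e => ω e = true) (ω ⊓ ω') = ω := by
    funext x
    unfold orInd
    by_cases hx : ω x = true
    · simp [hx]
    · simp only [Finset.mem_filter, Finset.mem_univ, true_and, if_neg hx]
      show ω x ⊓ ω' x = ω x
      rw [Bool.not_eq_true] at hx
      rw [hx]
      exact bot_inf_eq _
  have e2 : orInd (G := G) (Finset.univ.filter fun e => ω e = true) ω' = ω ⊔ ω' := by
    funext x
    unfold orInd
    by_cases hx : ω x = true
    · simp only [Finset.mem_filter, Finset.mem_univ, true_and, if_pos hx]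
      show true = ω x ⊔ ω' x
      rw [hx]
      exact (top_sup_eq _).symm
    · simp only [Finset.mem_filter, Finset.mem_univ, true_and, if_neg hx]
      show ω' x = ω x ⊔ ω' x
      rw [Bool.not_eq_true] at hx
      rw [hx]
      exact (bot_sup_eq _).symm
  rw [e1, e2] at key
  omega

lemma numOpen_le (ω : ↥G.edgeFinset → Bool) : numOpen G ω ≤ G.edgeFinset.card := by
  unfold numOpen
  calc (Finset.univ.filter fun e => ω e = true).card
      ≤ (Finset.univ : Finset ↥G.edgeFinset).card := Finset.card_filter_le _ _
    _ = G.edgeFinset.card := by rw [Finset.card_univ, Fintype.card_coe]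

lemma numOpen_inf_add_sup (ω ω' : ↥G.edgeFinset → Bool) :
    numOpen G (ω ⊓ ω') + numOpen G (ω ⊔ ω') = numOpen G ω + numOpen G ω' := by
  classical
  unfold numOpen
  have hinf : (Finset.univ.filter fun e => (ω ⊓ ω') e = true)
      = (Finset.univ.filter fun e => ω e = true) ∩
        (Finset.univ.filter fun e => ω' e = true) := by
    ext x
    simp only [Finset.mem_filter, Finset.mem_inter, Finset.mem_univ, true_and]
    show ω x ⊓ ω' x = true ↔ _
    cases h1 : ω x <;> cases h2 : ω' x <;> simp
  have hsup : (Finset.univ.filter fun e => (ω ⊔ ω') e = true)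
      = (Finset.univ.filter fun e => ω e = true) ∪
        (Finset.univ.filter fun e => ω' e = true) := by
    ext x
    simp only [Finset.mem_filter, Finset.mem_union, Finset.mem_univ, true_and]
    show ω x ⊔ ω' x = true ↔ _
    cases h1 : ω x <;> cases h2 : ω' x <;> simp
  rw [hinf, hsup, add_comm, Finset.card_union_add_card_inter]

lemma fkWeight_nonneg {p q : ℝ} (hp0 : 0 ≤ p) (hp1 : p ≤ 1) (hq : 1 ≤ q)
    (ω : ↥G.edgeFinset → Bool) : 0 ≤ fkWeight G p q ω :=
  mul_nonneg (mul_nonneg (pow_nonneg hp0 _) (pow_nonneg (by linarith) _))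
    (pow_nonneg (by linarith) _)

lemma fkWeight_cond {p q : ℝ} (hp0 : 0 ≤ p) (hp1 : p ≤ 1) (hq : 1 ≤ q)
    (ω ω' : ↥G.edgeFinset → Bool) :
    fkWeight G p q ω * fkWeight G p q ω'
      ≤ fkWeight G p q (ω ⊓ ω') * fkWeight G p q (ω ⊔ ω') := by
  have e1 := numOpen_inf_add_sup (G := G) ω ω'
  have b1 := numOpen_le (G := G) ω
  have b2 := numOpen_le (G := G) ω'
  have b3 := numOpen_le (G := G) (ω ⊓ ω')
  have b4 := numOpen_le (G := G) (ω ⊔ ω')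
  have e2 : (G.edgeFinset.card - numOpen G (ω ⊓ ω'))
        + (G.edgeFinset.card - numOpen G (ω ⊔ ω'))
      = (G.edgeFinset.card - numOpen G ω) + (G.edgeFinset.card - numOpen G ω') := by
    omega
  have e3 := numComponents_submodular (G := G) ω ω'
  have hL : fkWeight G p q ω * fkWeight G p q ω'
      = p ^ (numOpen G ω + numOpen G ω')
        * (1 - p) ^ ((G.edgeFinset.card - numOpen G ω)
            + (G.edgeFinset.card - numOpen G ω'))
        * (q ^ numComponents G ω * q ^ numComponents G ω') := by
    unfold fkWeight; rw [pow_add, pow_add]; ring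
  have hR : fkWeight G p q (ω ⊓ ω') * fkWeight G p q (ω ⊔ ω')
      = p ^ (numOpen G ω + numOpen G ω')
        * (1 - p) ^ ((G.edgeFinset.card - numOpen G ω)
            + (G.edgeFinset.card - numOpen G ω'))
        * (q ^ (numComponents G (ω ⊓ ω') + numComponents G (ω ⊔ ω'))) := by
    unfold fkWeight; rw [← e1, ← e2, pow_add, pow_add]; ring
  rw [hL, hR]
  have hq0 : (0:ℝ) ≤ 1 - p := by linarith
  refine mul_le_mul_of_nonneg_left ?_
    (mul_nonneg (pow_nonneg hp0 _) (pow_nonneg hq0 _))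
  rw [← pow_add]
  exact pow_le_pow_right₀ (by linarith) e3

lemma numOpen_top : numOpen G (fun _ => true) = G.edgeFinset.card := by
  unfold numOpen
  rw [Finset.filter_true_of_mem (fun _ _ => rfl), Finset.card_univ, Fintype.card_coe]

lemma fkWeight_pos_exists {p q : ℝ} (hp0 : 0 ≤ p) (hp1 : p ≤ 1) (hq : 1 ≤ q) :
    ∃ ω : ↥G.edgeFinset → Bool, 0 < fkWeight G p q ω := by
  have hq0 : (0:ℝ) < q := by linarith
  by_cases hp : p = 1
  · refine ⟨fun _ => true, ?_⟩
    unfold fkWeight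
    rw [numOpen_top, Nat.sub_self, pow_zero, hp, one_pow, one_mul, one_mul]
    exact pow_pos hq0 _
  · refine ⟨fun _ => false, ?_⟩
    have h0 : numOpen G (fun _ => false) = 0 := by
      unfold numOpen
      simp
    unfold fkWeight
    rw [h0, pow_zero, one_mul, Nat.sub_zero]
    have : (0:ℝ) < 1 - p := by
      rcases lt_or_eq_of_le hp1 with h | h
      · linarith
      · exact absurd h hp
    exact mul_pos (pow_pos this _) (pow_pos hq0 _)

end FKGAux
/-- **FKG inequality for FK percolation with cluster weight `q ≥ 1`**: for
`p ∈ [0,1]`, `q ≥ 1`, and increasing functions `f, g : {0,1}^E → ℝ`,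
`φ_{G,p,q}[fg] ≥ φ_{G,p,q}[f]·φ_{G,p,q}[g]`. -/
theorem fk_fkg_inequality {V : Type*} [Fintype V] [DecidableEq V]
    (G : SimpleGraph V) [DecidableRel G.Adj] (p q : ℝ)
    (hp0 : 0 ≤ p) (hp1 : p ≤ 1) (hq : 1 ≤ q)
    (f g : (↥G.edgeFinset → Bool) → ℝ) (hf : Monotone f) (hg : Monotone g) :
    fkExpect G p q (fun ω => f ω * g ω) ≥ fkExpect G p q f * fkExpect G p q g := by
  classical
  set μ : (↥G.edgeFinset → Bool) → ℝ := fkWeight G p q with hμdef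
  have hμ0 : ∀ ω, 0 ≤ μ ω := FKGAux.fkWeight_nonneg hp0 hp1 hq
  set Z := ∑ ω : ↥G.edgeFinset → Bool, μ ω with hZdef
  have hZ : 0 < Z := by
    obtain ⟨ω₀, hω₀⟩ := FKGAux.fkWeight_pos_exists (G := G) hp0 hp1 hq
    exact Finset.sum_pos' (fun ω _ => hμ0 ω) ⟨ω₀, Finset.mem_univ _, hω₀⟩
  set Sf := ∑ ω : ↥G.edgeFinset → Bool, f ω * μ ω with hSf
  set Sg := ∑ ω : ↥G.edgeFinset → Bool, g ω * μ ω with hSg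
  set Sfg := ∑ ω : ↥G.edgeFinset → Bool, (f ω * g ω) * μ ω with hSfg
  have key : Sf * Sg ≤ Z * Sfg := by
    set cf := f ⊥ with hcf
    set cg := g ⊥ with hcg
    set F : (↥G.edgeFinset → Bool) → ℝ := fun ω => f ω - cf with hF
    set Gg : (↥G.edgeFinset → Bool) → ℝ := fun ω => g ω - cg with hGg
    have hF0 : (0:((↥G.edgeFinset → Bool) → ℝ)) ≤ F := fun ω => by
      simp only [hF, Pi.zero_apply, sub_nonneg]
      exact hf bot_le
    have hG0 : (0:((↥G.edgeFinset → Bool) → ℝ)) ≤ Gg := fun ω => by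
      simp only [hGg, Pi.zero_apply, sub_nonneg]
      exact hg bot_le
    have hFm : Monotone F := fun a b hab => sub_le_sub_right (hf hab) _
    have hGm : Monotone Gg := fun a b hab => sub_le_sub_right (hg hab) _
    have hcond : ∀ a b, μ a * μ b ≤ μ (a ⊓ b) * μ (a ⊔ b) :=
      fun a b => FKGAux.fkWeight_cond hp0 hp1 hq a b
    have hμ0' : (0:((↥G.edgeFinset → Bool) → ℝ)) ≤ μ := fun ω => hμ0 ω
    have hfkg := fkg (μ := μ) (f := F) (g := Gg) hμ0' hF0 hG0 hFm hGm hcond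
    have eF : ∑ ω : ↥G.edgeFinset → Bool, μ ω * F ω = Sf - cf * Z := by
      have h : ∀ ω : ↥G.edgeFinset → Bool, μ ω * F ω = f ω * μ ω - cf * μ ω :=
        fun ω => by simp only [hF]; ring
      rw [Finset.sum_congr rfl (fun ω _ => h ω), Finset.sum_sub_distrib, ← Finset.mul_sum]
    have eG : ∑ ω : ↥G.edgeFinset → Bool, μ ω * Gg ω = Sg - cg * Z := by
      have h : ∀ ω : ↥G.edgeFinset → Bool, μ ω * Gg ω = g ω * μ ω - cg * μ ω :=
        fun ω => by simp only [hGg]; ring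
      rw [Finset.sum_congr rfl (fun ω _ => h ω), Finset.sum_sub_distrib, ← Finset.mul_sum]
    have eFG : ∑ ω : ↥G.edgeFinset → Bool, μ ω * (F ω * Gg ω)
        = Sfg - cf * Sg - cg * Sf + cf * cg * Z := by
      have h : ∀ ω : ↥G.edgeFinset → Bool, μ ω * (F ω * Gg ω)
          = (f ω * g ω) * μ ω - cf * (g ω * μ ω) - cg * (f ω * μ ω)
            + (cf * cg) * μ ω :=
        fun ω => by simp only [hF, hGg]; ring
      rw [Finset.sum_congr rfl (fun ω _ => h ω)]
      rw [Finset.sum_add_distrib, Finset.sum_sub_distrib, Finset.sum_sub_distrib,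
        ← Finset.mul_sum, ← Finset.mul_sum, ← Finset.mul_sum]
    rw [eF, eG, eFG] at hfkg
    nlinarith [hfkg]
  unfold fkExpect
  rw [ge_iff_le, div_mul_div_comm, div_le_div_iff₀ (mul_pos hZ hZ) hZ]
  calc Sf * Sg * Z ≤ (Z * Sfg) * Z := mul_le_mul_of_nonneg_right key hZ.le
    _ = Sfg * (Z * Z) := by ring
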